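/- Among all seeds of the form #^p - #^q with p+q = d fixed and p,q ≥ 1, the 1-critical length (the minimal m such that the seed solves the (m,1)-problem) is minimized when p = ⌈d/2⌉ and q = ⌊d/2⌋, with minimal critical length d + ⌈d/2⌉ + 1. -/
import Mathlib

/-- Number of zeros of word `w` among positions `0 .. m-1`. -/
def zerosIn (m : ℕ) (w : ℕ → Bool) : ℕ :=
  ((Finset.range m).filter (fun j => w j = false)).card

/-- Seed `Q` matches word `w` of length `m` at position `i`. -/
def MatchesAt (Q : Finset ℕ) (m : ℕ) (w : ℕ → Bool) (i : ℕ) : Prop :=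
  ∀ p ∈ Q, i + p < m ∧ w (i + p) = true

/-- Seed `Q` detects word `w` of length `m`. -/
def Detects (Q : Finset ℕ) (m : ℕ) (w : ℕ → Bool) : Prop :=
  ∃ i, MatchesAt Q m w i

/-- Seed `Q` solves the linear `(m,k)`-problem. -/
def Solves (Q : Finset ℕ) (m k : ℕ) : Prop :=
  ∀ w : ℕ → Bool, zerosIn m w ≤ k → Detects Q m w

/-- A family of seeds solves the linear `(m,k)`-problem. -/
def FSolves (F : Set (Finset ℕ)) (m k : ℕ) : Prop :=
  ∀ w : ℕ → Bool, zerosIn m w ≤ k → ∃ Q ∈ F, Detects Q m w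

/-- Seed `Q` solves the cyclic `(m,k)`-problem. -/
def CSolves (Q : Finset ℕ) (m k : ℕ) : Prop :=
  ∀ w : ℕ → Bool, zerosIn m w ≤ k →
    ∃ j < m, ∀ p ∈ Q, w ((j + p) % m) = true

/-- The seed `#^p - #^q` : matching positions `0..p-1` and `p+1..p+q`. -/
def Qpq (p q : ℕ) : Finset ℕ := Finset.range p ∪ Finset.Icc (p+1) (p+q)

/-- The `k`-critical length of a seed: least `m` such that it solves the `(m,k)`-problem. -/
noncomputable def critLen (Q : Finset ℕ) (k : ℕ) : ℕ := sInf {m | Solves Q m k}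

lemma mem_Qpq {p q x : ℕ} : x ∈ Qpq p q ↔ x < p ∨ (p + 1 ≤ x ∧ x ≤ p + q) := by
  simp [Qpq]

lemma zerosIn_single (m z : ℕ) : zerosIn m (fun j => decide (j ≠ z)) ≤ 1 := by
  have h : ((Finset.range m).filter (fun j => (decide (j ≠ z)) = false)) ⊆ {z} := by
    intro j hj
    simp only [Finset.mem_filter, decide_eq_false_iff_not, not_not] at hj
    simp [hj.2]
  calc zerosIn m (fun j => decide (j ≠ z)) ≤ ({z} : Finset ℕ).card :=
        Finset.card_le_card h
    _ = 1 := by simp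

lemma solves_iff (p q m : ℕ) (hp : 1 ≤ p) (hq : 1 ≤ q) :
    Solves (Qpq p q) m 1 ↔ p + q + max p q + 1 ≤ m := by
  constructor
  · intro h
    by_contra hm
    push_neg at hm
    have hmax : m ≤ 2 * p + q ∨ m ≤ p + 2 * q := by
      rcases Nat.le_total p q with h1 | h1
      · right; omega
      · left; omega
    rcases hmax with hA | hB
    · -- bad word: zero at z = m - (p+q+1)
      set z := m - (p + q + 1) with hz
      obtain ⟨i, hi⟩ := h (fun j => decide (j ≠ z)) (zerosIn_single m z)
      have hend := hi (p + q) (mem_Qpq.mpr (Or.inr ⟨by omega, le_refl _⟩))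
      have h1 : i + p + q < m := by omega
      have hle : i ≤ z ∧ z - i < p := by omega
      have h2 := hi (z - i) (mem_Qpq.mpr (Or.inl hle.2))
      have h3 : i + (z - i) = z := by omega
      rw [h3] at h2
      simp at h2
    · -- bad word: zero at z = m - q
      set z := m - q with hz
      obtain ⟨i, hi⟩ := h (fun j => decide (j ≠ z)) (zerosIn_single m z)
      have hend := hi (p + q) (mem_Qpq.mpr (Or.inr ⟨by omega, le_refl _⟩))
      have h1 : i + p + q < m := by omega
      have hle : i ≤ z ∧ p + 1 ≤ z - i ∧ z - i ≤ p + q := by omega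
      have h2 := hi (z - i) (mem_Qpq.mpr (Or.inr ⟨hle.2.1, hle.2.2⟩))
      have h3 : i + (z - i) = z := by omega
      rw [h3] at h2
      simp at h2
  · intro hm w hw
    have hmaxp : p ≤ max p q := le_max_left p q
    have hmaxq : q ≤ max p q := le_max_right p q
    by_cases hex : ∃ z, z < m ∧ w z = false
    · obtain ⟨z, hzm, hwz⟩ := hex
      have huniq : ∀ j, j < m → w j = false → j = z := by
        intro j hjm hwj
        have hcard : ((Finset.range m).filter (fun j => w j = false)).card ≤ 1 := hw
        have hjmem : j ∈ (Finset.range m).filter (fun j => w j = false) := by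
          simp [hjm, hwj]
        have hzmem : z ∈ (Finset.range m).filter (fun j => w j = false) := by
          simp [hzm, hwz]
        exact Finset.card_le_one.mp hcard j hjmem z hzmem
      have wtrue : ∀ j, j < m → j ≠ z → w j = true := by
        intro j hjm hjz
        cases hwj : w j with
        | false => exact absurd (huniq j hjm hwj) hjz
        | true => rfl
      rcases lt_or_ge z p with hzp | hzp
      · -- z < p : use i = z + 1
        refine ⟨z + 1, fun r hr => ?_⟩
        have hrQ := mem_Qpq.mp hr
        have hrle : r ≤ p + q := by rcases hrQ with h' | h' <;> omega
        have hlt : z + 1 + r < m := by omega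
        exact ⟨hlt, wtrue _ hlt (by omega)⟩
      · rcases lt_or_ge (z + q) m with hzq | hzq
        · -- p ≤ z, z + q < m : use i = z - p
          refine ⟨z - p, fun r hr => ?_⟩
          have hrQ := mem_Qpq.mp hr
          have hrle : r ≤ p + q := by rcases hrQ with h' | h' <;> omega
          have hlt : z - p + r < m := by omega
          refine ⟨hlt, wtrue _ hlt ?_⟩
          rcases hrQ with h' | h' <;> omega
        · -- z + q ≥ m : z > p + q, use i = 0
          refine ⟨0, fun r hr => ?_⟩
          have hrQ := mem_Qpq.mp hr
          have hrle : r ≤ p + q := by rcases hrQ with h' | h' <;> omega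
          have hlt : 0 + r < m := by omega
          exact ⟨hlt, wtrue _ hlt (by omega)⟩
    · push_neg at hex
      refine ⟨0, fun r hr => ?_⟩
      have hrQ := mem_Qpq.mp hr
      have hrle : r ≤ p + q := by rcases hrQ with h' | h' <;> omega
      have hlt : 0 + r < m := by omega
      refine ⟨hlt, ?_⟩
      cases hwr : w (0 + r) with
      | false => exact absurd hwr (hex _ hlt)
      | true => rfl

lemma critQpq (p q : ℕ) (hp : 1 ≤ p) (hq : 1 ≤ q) :
    critLen (Qpq p q) 1 = p + q + max p q + 1 := by
  have hset : {m | Solves (Qpq p q) m 1} = Set.Ici (p + q + max p q + 1) := by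
    ext m
    simpa [Set.mem_Ici] using solves_iff p q m hp hq
  rw [critLen, hset, csInf_Ici]

/-- among seeds `#^p - #^q` with `p + q = d`, `p,q ≥ 1`, the 1-critical
length is minimized by `p = ⌈d/2⌉`, `q = ⌊d/2⌋`, and equals `d + ⌈d/2⌉ + 1`. -/
theorem stmt3 (d : ℕ) (hd : 2 ≤ d) :
    critLen (Qpq ((d+1)/2) (d/2)) 1 = d + (d+1)/2 + 1 ∧
    (∀ p q : ℕ, 1 ≤ p → 1 ≤ q → p + q = d →
      critLen (Qpq ((d+1)/2) (d/2)) 1 ≤ critLen (Qpq p q) 1) := by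
  have h1 : (1 : ℕ) ≤ (d+1)/2 := by omega
  have h2 : (1 : ℕ) ≤ d/2 := by omega
  have hmax : max ((d+1)/2) (d/2) = (d+1)/2 := by
    rw [max_eq_left]; omega
  have hval : critLen (Qpq ((d+1)/2) (d/2)) 1 = d + (d+1)/2 + 1 := by
    rw [critQpq _ _ h1 h2, hmax]; omega
  refine ⟨hval, fun p q hp hq hpq => ?_⟩
  rw [hval, critQpq p q hp hq]
  have : (d+1)/2 ≤ max p q := by
    rcases Nat.le_total p q with h | h
    · rw [max_eq_right h]; omega
    · rw [max_eq_left h]; omega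
  omega
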